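/- Let F be a field, V an F-vector space with finrank F V = 2, and e : V → V → F an alternating F-bilinear form (e(v,v) = 0 for all v). Let f : V → V be an F-linear map and α ∈ F such that (f - α·id) ∘ (f - α·id) = 0. Suppose Q, Q' ∈ V satisfy f(Q) ∉ F·Q and f(Q') ∉ F·Q'. Then there exists μ ∈ F with μ ≠ 0 such that e(Q', f(Q')) = μ²·e(Q, f(Q)). -/

import Mathlib

/-- Invariance statement from the proof of Theorem 1.1: if `(f - α•id)² = 0` on
a 2-dimensional space, then the pairing value `e(Q, f Q)` of a non-eigenvector
`Q` is independent of `Q` up to nonzero square factors. -/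
theorem pairing_nonEigenvector_invariance (F : Type*) [Field F] (V : Type*)
    [AddCommGroup V] [Module F V] (hdim : Module.finrank F V = 2)
    (e : V →ₗ[F] V →ₗ[F] F) (halt : ∀ v : V, e v v = 0)
    (f : V →ₗ[F] V) (α : F)
    (hf : (f - α • (LinearMap.id : V →ₗ[F] V)) ∘ₗ
          (f - α • (LinearMap.id : V →ₗ[F] V)) = 0)
    (Q Q' : V) (hQ : f Q ∉ Submodule.span F {Q}) (hQ' : f Q' ∉ Submodule.span F {Q'}) :
    ∃ μ : F, μ ≠ 0 ∧ e Q' (f Q') = μ ^ 2 * e Q (f Q) := by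
  set g : V →ₗ[F] V := f - α • (LinearMap.id : V →ₗ[F] V) with hg_def
  have hgg : ∀ v : V, g (g v) = 0 := by
    intro v
    have := LinearMap.congr_fun hf (v : V)
    simpa using this
  have hfg : ∀ v : V, f v = g v + α • v := by
    intro v
    simp [hg_def]
  have key : ∀ R : V, f R ∉ Submodule.span F {R} → g R ∉ Submodule.span F {R} := by
    intro R hR hmem
    apply hR
    rw [hfg R]
    exact Submodule.add_mem _ hmem
      (Submodule.smul_mem _ _ (Submodule.mem_span_singleton_self R))
  have hgQ := key Q hQ
  have hQ0 : Q ≠ 0 := by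
    rintro rfl
    exact hQ (by simp)
  have hli : LinearIndependent F ![Q, g Q] := by
    rw [LinearIndependent.pair_iff]
    intro s t hst
    rcases eq_or_ne t 0 with ht | ht
    · subst ht
      have hs0 : s • Q = 0 := by simpa using hst
      rcases smul_eq_zero.mp hs0 with hs | hs
      · exact ⟨hs, rfl⟩
      · exact absurd hs hQ0
    · exfalso
      apply hgQ
      have h1 : t • g Q = -(s • Q) := eq_neg_of_add_eq_zero_right hst
      have h2 : g Q = (t⁻¹ * (-s)) • Q := by
        rw [eq_comm, mul_smul, neg_smul, ← h1, smul_smul, inv_mul_cancel₀ ht, one_smul]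
      rw [h2]
      exact Submodule.smul_mem _ _ (Submodule.mem_span_singleton_self Q)
  have hcard : Fintype.card (Fin 2) = Module.finrank F V := by simp [hdim]
  let b : Module.Basis (Fin 2) F V := basisOfLinearIndependentOfCardEqFinrank hli hcard
  have hb : ∀ i, b i = ![Q, g Q] i := fun i => by
    simp [b, coe_basisOfLinearIndependentOfCardEqFinrank]
  set a : F := b.repr Q' 0 with ha_def
  set c : F := b.repr Q' 1 with hc_def
  have hrepr : Q' = a • Q + c • g Q := by
    have h := b.sum_repr Q'
    rw [Fin.sum_univ_two, hb 0, hb 1] at h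
    simpa using h.symm
  have hgQ' : g Q' = a • g Q := by
    rw [hrepr]
    simp [map_add, map_smul, hgg Q]
  have ha : a ≠ 0 := by
    intro h0
    apply hQ'
    rw [hfg Q', hgQ', h0, zero_smul, zero_add]
    exact Submodule.smul_mem _ _ (Submodule.mem_span_singleton_self Q')
  refine ⟨a, ha, ?_⟩
  have e1 : e Q (f Q) = e Q (g Q) := by
    rw [hfg Q]
    simp [map_add, map_smul, halt Q]
  have step : e Q' (f Q') = e Q' (g Q') := by
    rw [hfg Q']
    simp [map_add, map_smul, halt Q']
  rw [step, hgQ', e1]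
  nth_rewrite 1 [hrepr]
  simp [map_add, map_smul, LinearMap.add_apply, LinearMap.smul_apply, halt (g Q),
    smul_eq_mul]
  ring
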